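/- arXiv:1807.00258 — 4 statements merged into one kernel-verified Lean document; each statement's English description precedes it below -/
import Mathlib

section
/- Let D be a real symmetric positive definite matrix indexed by a finite set Λ, let j ≠ k in Λ, and suppose there is a > 0 such that [φ; D φ] ≥ a (φ_j − φ_k)² for all φ ∈ ℝ^Λ. Then [(δ_j − δ_k); D^{-1} (δ_j − δ_k)] ≤ 1/a, where δ_j denotes the indicator vector of the coordinate j. -/
open Matrix

/-- Let `D` be a real symmetric positive definite matrix indexed by a
finite set `Λ`, let `j ≠ k` in `Λ`, and suppose there is `a > 0` such that
`[φ; D φ] ≥ a (φ j − φ k)²` for all `φ ∈ ℝ^Λ`.  Then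
`[(δ_j − δ_k); D⁻¹ (δ_j − δ_k)] ≤ 1 / a`. -/
theorem stmt_1 (Λ : Type*) [Fintype Λ] [DecidableEq Λ]
    (D : Matrix Λ Λ ℝ) (hD : D.PosDef)
    (j k : Λ) (hjk : j ≠ k) (a : ℝ) (ha : 0 < a)
    (hbound : ∀ φ : Λ → ℝ, a * (φ j - φ k) ^ 2 ≤ φ ⬝ᵥ (D *ᵥ φ)) :
    (Pi.single j 1 - Pi.single k 1) ⬝ᵥ (D⁻¹ *ᵥ (Pi.single j 1 - Pi.single k 1)) ≤ 1 / a := by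
  set w : Λ → ℝ := Pi.single j 1 - Pi.single k 1 with hw
  set ψ : Λ → ℝ := D⁻¹ *ᵥ w with hψ
  have hw0 : w ≠ 0 := by
    intro h
    have := congrFun h j
    simp [hw, Pi.single_apply, hjk] at this
  have hDψ : D *ᵥ ψ = w := by
    rw [hψ, mulVec_mulVec, mul_nonsing_inv _ hD.det_pos.ne'.isUnit, one_mulVec]
  have ht : ψ j - ψ k = w ⬝ᵥ ψ := by
    simp [hw, sub_dotProduct, single_dotProduct]
  have hsym : w ⬝ᵥ ψ = ψ ⬝ᵥ w := dotProduct_comm _ _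
  have h1 := hbound ψ
  rw [hDψ, ht, ← hsym] at h1
  have hpos : 0 < w ⬝ᵥ ψ := by
    have := (hD.inv).dotProduct_mulVec_pos hw0
    simpa [hψ] using this
  have : w ⬝ᵥ ψ ≤ 1 / a := by
    rw [le_div_iff₀ ha]
    nlinarith
  exact this
end

section
/- Fix d ≥ 1, a finite box Λ ⊂ ℤ^d with periodic (torus) edge set E(T_N), and ε > 0. For t ∈ ℝ^{E(T_N)} let D(t) be the symmetric positive definite matrix on ℝ^Λ determined by the quadratic form [f; D(t) f] = Σ_{jk ∈ E(T_N)} e^{t_{jk}} (f_j − f_k)² + ε Σ_{j ∈ Λ} f_j². Then the map t ↦ ln det D(t) is a convex function of t on ℝ^{E(T_N)}. -/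
open Matrix

/-- Vertex set of the `d`-dimensional discrete torus with side lengths `N`. -/
abbrev TorusV (d : ℕ) (N : Fin d → ℕ) := ∀ i : Fin d, ZMod (N i)

/-- Edge set of the discrete torus: an edge is a pair `(x, i)` joining `x` and
`x + eᵢ`, where `eᵢ` is the `i`-th coordinate unit vector.  (For side lengths at
least `3` this is a faithful indexing of the nearest-neighbor edges, including
the wrap-around edges.) -/
abbrev TorusE (d : ℕ) (N : Fin d → ℕ) := TorusV d N × Fin d

/-- The coordinate unit vector in direction `i` on the torus. -/
def unitv {d : ℕ} {N : Fin d → ℕ} (i : Fin d) : TorusV d N :=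
  fun j => if j = i then 1 else 0

lemma aux_posDef_of_det_ne_zero {n : Type*} [Fintype n] [DecidableEq n]
    {G : Matrix n n ℝ} (h : G.PosSemidef) (hdet : G.det ≠ 0) : G.PosDef := by
  refine Matrix.PosDef.of_dotProduct_mulVec_pos h.1 fun x hx => lt_of_le_of_ne (h.dotProduct_mulVec_nonneg x) (Ne.symm fun h0 => hx ?_)
  have hGx : G *ᵥ x = 0 := (h.dotProduct_mulVec_zero_iff x).mp h0
  have hinj : Function.Injective (G.mulVec) :=
    Matrix.mulVec_injective_iff_isUnit.mpr ((Matrix.isUnit_iff_isUnit_det G).mpr (isUnit_iff_ne_zero.mpr hdet))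
  have : G *ᵥ x = G *ᵥ 0 := by rw [hGx, Matrix.mulVec_zero]
  exact hinj this



lemma aux_one_le_det_one_add {n : Type*} [Fintype n] [DecidableEq n]
    {T : Matrix n n ℝ} (hT : T.PosSemidef) : 1 ≤ (1 + T).det := by
  set U : Matrix n n ℝ := (hT.1.eigenvectorUnitary : Matrix n n ℝ) with hUdef
  have hUU : U * star U = 1 := (Matrix.mem_unitaryGroup_iff).mp hT.1.eigenvectorUnitary.2
  set v : n → ℝ := fun i => (RCLike.ofReal (hT.1.eigenvalues i) : ℝ) with hv
  have key : 1 + T = U * (1 + diagonal v) * star U := by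
    calc 1 + T = U * star U + U * diagonal v * star U := by
          rw [hUU]; congr 1; exact hT.1.spectral_theorem
      _ = U * (1 + diagonal v) * star U := by rw [mul_add, mul_one, add_mul]
  rw [key, det_mul_right_comm, hUU, one_mul, ← diagonal_one, diagonal_add, det_diagonal]
  have : (1:ℝ) = ∏ _i : n, (1:ℝ) := by simp
  rw [this]
  refine Finset.prod_le_prod (fun i _ => zero_le_one) fun i _ => ?_
  have := hT.eigenvalues_nonneg i
  simp only [hv, Pi.add_apply, Pi.one_apply]
  simp only [RCLike.ofReal_real_eq_id, id] at *
  linarith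


open scoped MatrixOrder in
lemma aux_det_le_det_add {n : Type*} [Fintype n] [DecidableEq n]
    {G S : Matrix n n ℝ} (hG : G.PosDef) (hS : S.PosSemidef) : G.det ≤ (G + S).det := by
  set W := CFC.sqrt G with hWdef
  have hW : W.PosSemidef := (CFC.sqrt_nonneg G).posSemidef
  have hWW : W * W = G := CFC.sqrt_mul_sqrt_self G hG.posSemidef.nonneg
  have hdetG : 0 < G.det := hG.det_pos
  have hdetW : W.det ≠ 0 := by
    intro h0
    rw [← hWW, det_mul, h0, mul_zero] at hdetG
    exact lt_irrefl _ hdetG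
  have hu : IsUnit W.det := isUnit_iff_ne_zero.mpr hdetW
  have hWinvH : W⁻¹.IsHermitian := hW.isHermitian.inv
  have hT : (W⁻¹ * S * W⁻¹).PosSemidef := by
    have := hS.conjTranspose_mul_mul_same (B := W⁻¹)
    rwa [hWinvH] at this
  have key : G + S = W * (1 + W⁻¹ * S * W⁻¹) * W := by
    rw [mul_add, mul_one, add_mul, hWW]
    congr 1; symm
    calc W * (W⁻¹ * S * W⁻¹) * W = (W * W⁻¹) * S * (W⁻¹ * W) := by
          simp only [Matrix.mul_assoc]
      _ = S := by rw [mul_nonsing_inv _ hu, nonsing_inv_mul _ hu, one_mul, mul_one]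
  calc G.det = G.det * 1 := (mul_one _).symm
    _ ≤ G.det * (1 + W⁻¹ * S * W⁻¹).det :=
        mul_le_mul_of_nonneg_left (aux_one_le_det_one_add hT) hdetG.le
    _ = (G + S).det := by
        rw [key, det_mul, det_mul, ← hWW, det_mul]; ring


lemma aux_gram_schwarz {n m : Type*} [Fintype n] [Fintype m] [DecidableEq n] [DecidableEq m]
    {P Q : Matrix n m ℝ} (hP : (P * Pᴴ).PosDef) (hQ : (Q * Qᴴ).PosDef) :
    det (P * Qᴴ) ^ 2 ≤ det (P * Pᴴ) * det (Q * Qᴴ) := by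
  set A := P * Pᴴ with hA
  set B := Q * Qᴴ with hB
  set C := P * Qᴴ with hC
  by_cases hdC : C.det = 0
  · rw [hdC]
    simpa using mul_nonneg hP.det_pos.le hQ.det_pos.le
  · have hdA : 0 < A.det := hP.det_pos
    have huA : IsUnit A.det := isUnit_iff_ne_zero.mpr hdA.ne'
    have hAH : A⁻¹.IsHermitian := hP.isHermitian.inv
    set Pi' : Matrix m m ℝ := Pᴴ * A⁻¹ * P with hPi
    have hPiH : Pi'ᴴ = Pi' := by
      rw [hPi, conjTranspose_mul, conjTranspose_mul, conjTranspose_conjTranspose, hAH,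
        Matrix.mul_assoc]
    have hPi2 : Pi' * Pi' = Pi' := by
      rw [hPi]
      calc Pᴴ * A⁻¹ * P * (Pᴴ * A⁻¹ * P) = Pᴴ * (A⁻¹ * A * A⁻¹) * P := by
            rw [hA]; simp only [Matrix.mul_assoc]
        _ = Pᴴ * A⁻¹ * P := by
            rw [nonsing_inv_mul _ huA, one_mul, Matrix.mul_assoc]
    set R := Q * (1 - Pi') with hR
    have hone : (1 - Pi') * (1 - Pi') = 1 - Pi' := by
      rw [Matrix.sub_mul, Matrix.one_mul, Matrix.mul_sub, Matrix.mul_one, hPi2, sub_self,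
        sub_zero]
    have hRH : R * Rᴴ = Q * (1 - Pi') * Qᴴ := by
      rw [hR, conjTranspose_mul, conjTranspose_sub, conjTranspose_one, hPiH]
      calc Q * (1 - Pi') * ((1 - Pi') * Qᴴ) = Q * ((1 - Pi') * (1 - Pi')) * Qᴴ := by
            simp only [Matrix.mul_assoc]
        _ = Q * (1 - Pi') * Qᴴ := by rw [hone, Matrix.mul_assoc]
    have hCH : Cᴴ = Q * Pᴴ := by
      rw [hC, conjTranspose_mul, conjTranspose_conjTranspose]
    have hdecomp : B = Cᴴ * A⁻¹ * C + R * Rᴴ := by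
      rw [hCH, hC, hRH, hB]
      have : Q * Pᴴ * A⁻¹ * (P * Qᴴ) = Q * Pi' * Qᴴ := by
        rw [hPi]; simp only [Matrix.mul_assoc]
      rw [this, ← Matrix.add_mul, ← Matrix.mul_add]
      simp
    have hGpsd : (Cᴴ * A⁻¹ * C).PosSemidef := hP.inv.posSemidef.conjTranspose_mul_mul_same C
    have hdCH : Cᴴ.det = C.det := by rw [det_conjTranspose, star_trivial]
    have hGdet : (Cᴴ * A⁻¹ * C).det = C.det ^ 2 * A.det⁻¹ := by
      rw [det_mul, det_mul, hdCH, det_nonsing_inv, Ring.inverse_eq_inv']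
      ring
    have hGpd : (Cᴴ * A⁻¹ * C).PosDef := by
      refine aux_posDef_of_det_ne_zero hGpsd ?_
      rw [hGdet]
      positivity
    have hle : (Cᴴ * A⁻¹ * C).det ≤ B.det := by
      rw [hdecomp]
      exact aux_det_le_det_add hGpd (posSemidef_self_mul_conjTranspose R)
    rw [hGdet] at hle
    calc C.det ^ 2 = C.det ^ 2 * A.det⁻¹ * A.det := by field_simp
      _ ≤ B.det * A.det := mul_le_mul_of_nonneg_right hle hdA.le
      _ = A.det * B.det := mul_comm _ _

lemma aux_convexOn_of_midpoint {F : Type*} [AddCommGroup F] [Module ℝ F] [TopologicalSpace F]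
    [IsTopologicalAddGroup F] [ContinuousSMul ℝ F] {f : F → ℝ} (hf : Continuous f)
    (hmid : ∀ x y, f ((1/2 : ℝ) • (x + y)) ≤ (f x + f y) / 2) :
    ConvexOn ℝ Set.univ f := by
  refine ⟨convex_univ, fun x _ y _ a b ha hb hab => ?_⟩
  set g : ℝ → ℝ := fun c => f (c • x + (1 - c) • y) - (c * f x + (1 - c) * f y) with hg
  have hgc : Continuous g := by
    apply Continuous.sub
    · exact hf.comp ((continuous_id.smul continuous_const).add
        ((continuous_const.sub continuous_id).smul continuous_const))
    · fun_prop
  have hg0 : g 0 = 0 := by simp [hg]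
  have hg1 : g 1 = 0 := by simp [hg]
  have hgmid : ∀ p q : ℝ, g ((p + q) / 2) ≤ (g p + g q) / 2 := by
    intro p q
    have harg : ((p + q) / 2) • x + (1 - (p + q) / 2) • y
        = (1/2 : ℝ) • ((p • x + (1 - p) • y) + (q • x + (1 - q) • y)) := by
      module
    have h2 := hmid (p • x + (1 - p) • y) (q • x + (1 - q) • y)
    rw [← harg] at h2
    simp only [hg]
    ring_nf
    ring_nf at h2
    linarith
  have claim : ∀ c ∈ Set.Icc (0:ℝ) 1, g c ≤ 0 := by
    obtain ⟨c, hcI, hcmax⟩ := isCompact_Icc.exists_isMaxOn (Set.nonempty_Icc.mpr zero_le_one)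
      hgc.continuousOn
    suffices hM : g c ≤ 0 by intro e he; exact (hcmax he).trans hM
    by_contra hM
    push_neg at hM
    set T : Set ℝ := Set.Icc 0 1 ∩ g ⁻¹' {g c} with hT
    have hTne : T.Nonempty := ⟨c, hcI, rfl⟩
    have hTclosed : IsClosed T := isClosed_Icc.inter (isClosed_singleton.preimage hgc)
    have hTbdd : BddBelow T := (bddBelow_Icc).mono Set.inter_subset_left
    have hc₀T : sInf T ∈ T := hTclosed.csInf_mem hTne hTbdd
    set c₀ := sInf T with hc₀
    obtain ⟨⟨h0c, hc1⟩, hgc₀⟩ := hc₀T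
    have hgc₀' : g c₀ = g c := hgc₀
    have hc₀0 : c₀ ≠ 0 := by intro h; rw [h, hg0] at hgc₀'; linarith
    have hc₀1 : c₀ ≠ 1 := by intro h; rw [h, hg1] at hgc₀'; linarith
    have h0lt : 0 < c₀ := lt_of_le_of_ne h0c (Ne.symm hc₀0)
    have hlt1 : c₀ < 1 := lt_of_le_of_ne hc1 hc₀1
    set h := min c₀ (1 - c₀) with hh
    have hhpos : 0 < h := lt_min h0lt (by linarith)
    have hp : c₀ - h ∈ Set.Icc (0:ℝ) 1 := ⟨by have := min_le_left c₀ (1 - c₀); linarith,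
      by have := min_le_right c₀ (1 - c₀); linarith⟩
    have hq : c₀ + h ∈ Set.Icc (0:ℝ) 1 := ⟨by linarith,
      by have := min_le_right c₀ (1 - c₀); linarith⟩
    have hmidc : c₀ = ((c₀ - h) + (c₀ + h)) / 2 := by ring
    have h1 : g c₀ ≤ (g (c₀ - h) + g (c₀ + h)) / 2 := by
      have h1' := hgmid (c₀ - h) (c₀ + h)
      have harg : (c₀ - h + (c₀ + h)) / 2 = c₀ := by ring
      rwa [harg] at h1'
    have h2 : g (c₀ + h) ≤ g c := hcmax hq
    have h3 : g (c₀ - h) ≤ g c := hcmax hp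
    have h4 : g (c₀ - h) = g c := by
      rw [hgc₀'] at h1
      set GA := g (c₀ - h) with hGA
      set GB := g (c₀ + h) with hGB
      set GC := g c with hGC
      clear_value GA GB GC
      exact le_antisymm h3 (by linarith)
    have h5 : c₀ - h ∈ T := ⟨hp, h4⟩
    have := csInf_le hTbdd h5
    linarith
  have := claim a ⟨ha, by linarith⟩
  have hba : 1 - a = b := by linarith
  rw [hg] at this
  simp only [hba] at this
  simp only [smul_eq_mul]
  linarith

lemma aux_symm_ext {n : Type*} [Fintype n] [DecidableEq n] {A B : Matrix n n ℝ}
    (hA : A.IsHermitian) (hB : B.IsHermitian)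
    (h : ∀ f : n → ℝ, f ⬝ᵥ (A *ᵥ f) = f ⬝ᵥ (B *ᵥ f)) : A = B := by
  have key : ∀ C : Matrix n n ℝ, C.IsHermitian → (∀ f : n → ℝ, f ⬝ᵥ (C *ᵥ f) = 0) → C = 0 := by
    intro C hC hq
    ext j k
    have single : ∀ a b : n, Pi.single a (1:ℝ) ⬝ᵥ (C *ᵥ Pi.single b 1) = C a b := by
      intro a b
      simp [dotProduct, mulVec, Pi.single_apply, Finset.sum_ite_eq, mul_ite, ite_mul]
    have hsum := hq (Pi.single j 1 + Pi.single k 1)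
    rw [Matrix.mulVec_add, dotProduct_add, add_dotProduct, add_dotProduct] at hsum
    rw [single, single, single, single] at hsum
    have hjj := hq (Pi.single j 1); rw [single] at hjj
    have hkk := hq (Pi.single k 1); rw [single] at hkk
    have hsym : C k j = C j k := by
      have := congrFun (congrFun hC j) k
      simpa using this
    simp only [Matrix.zero_apply]
    linarith
  have := key (A - B) (hA.sub hB) fun f => by
    rw [Matrix.sub_mulVec, dotProduct_sub, h, sub_self]
  exact sub_eq_zero.mp this

/-- incidence entries -/
def auxMv {d : ℕ} {N : Fin d → ℕ} (j : TorusV d N) (e : TorusE d N) : ℝ :=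
  (if j = e.1 then 1 else 0) - (if j = e.1 + unitv e.2 then 1 else 0)

/-- the Gram matrix of the quadratic form with edge weights `w` -/
noncomputable def auxGram {d : ℕ} {N : Fin d → ℕ} [∀ i, NeZero (N i)] (ε : ℝ)
    (w : TorusE d N → ℝ) : Matrix (TorusV d N) (TorusV d N) ℝ :=
  Matrix.of fun j k => ε * (if j = k then 1 else 0) + ∑ e, w e * (auxMv j e * auxMv k e)

lemma auxGram_isHermitian {d : ℕ} {N : Fin d → ℕ} [∀ i, NeZero (N i)] (ε : ℝ)
    (w : TorusE d N → ℝ) : (auxGram ε w).IsHermitian := by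
  ext j k
  simp only [conjTranspose_apply, auxGram, of_apply, star_trivial]
  congr 1
  · by_cases h : j = k
    · subst h; rfl
    · simp [h, Ne.symm h]
  · exact Finset.sum_congr rfl fun e _ => by ring

lemma auxMv_sum {d : ℕ} {N : Fin d → ℕ} [∀ i, NeZero (N i)] (f : TorusV d N → ℝ)
    (e : TorusE d N) : (∑ j, f j * auxMv j e) = f e.1 - f (e.1 + unitv e.2) := by
  simp [auxMv, mul_sub, Finset.sum_sub_distrib, mul_ite, mul_one, mul_zero,
    Finset.sum_ite_eq', Finset.mem_univ]

lemma auxGram_form {d : ℕ} {N : Fin d → ℕ} [∀ i, NeZero (N i)] (ε : ℝ)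
    (w : TorusE d N → ℝ) (f : TorusV d N → ℝ) :
    f ⬝ᵥ (auxGram ε w *ᵥ f) =
      (∑ e, w e * (f e.1 - f (e.1 + unitv e.2)) ^ 2) + ε * ∑ j, f j ^ 2 := by
  simp only [dotProduct, mulVec, auxGram, of_apply]
  have expand : ∀ j : TorusV d N,
      (∑ k, (ε * (if j = k then (1:ℝ) else 0) + ∑ e, w e * (auxMv j e * auxMv k e)) * f k)
      = ε * f j + ∑ e, w e * auxMv j e * (f e.1 - f (e.1 + unitv e.2)) := by
    intro j
    simp only [add_mul, Finset.sum_add_distrib]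
    congr 1
    · simp [ite_mul, mul_ite, Finset.sum_ite_eq, Finset.mem_univ]
    · simp only [Finset.sum_mul]
      rw [Finset.sum_comm]
      refine Finset.sum_congr rfl fun e _ => ?_
      rw [← auxMv_sum f e, Finset.mul_sum]
      exact Finset.sum_congr rfl fun k _ => by ring
  calc ∑ j, f j * (∑ k, (ε * (if j = k then (1:ℝ) else 0)
          + ∑ e, w e * (auxMv j e * auxMv k e)) * f k)
      = ∑ j, (ε * (f j * f j) + ∑ e, f j * (w e * auxMv j e * (f e.1 - f (e.1 + unitv e.2)))) := by
        refine Finset.sum_congr rfl fun j _ => ?_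
        rw [expand j, mul_add, Finset.mul_sum]
        ring_nf
    _ = ε * (∑ j, f j ^ 2) + ∑ e, w e * (f e.1 - f (e.1 + unitv e.2)) ^ 2 := by
        rw [Finset.sum_add_distrib, Finset.sum_comm]
        congr 1
        · rw [Finset.mul_sum]
          exact Finset.sum_congr rfl fun j _ => by ring
        · refine Finset.sum_congr rfl fun e _ => ?_
          have := auxMv_sum f e
          calc ∑ j, f j * (w e * auxMv j e * (f e.1 - f (e.1 + unitv e.2)))
              = (w e * (f e.1 - f (e.1 + unitv e.2))) * ∑ j, f j * auxMv j e := by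
                rw [Finset.mul_sum]; exact Finset.sum_congr rfl fun j _ => by ring
            _ = w e * (f e.1 - f (e.1 + unitv e.2)) ^ 2 := by rw [this]; ring
    _ = (∑ e, w e * (f e.1 - f (e.1 + unitv e.2)) ^ 2) + ε * ∑ j, f j ^ 2 := by ring

noncomputable def auxP {d : ℕ} {N : Fin d → ℕ} [∀ i, NeZero (N i)] (ε : ℝ)
    (t : TorusE d N → ℝ) : Matrix (TorusV d N) (TorusV d N ⊕ TorusE d N) ℝ :=
  Matrix.of fun j x => Sum.elim (fun k => if j = k then Real.sqrt ε else 0)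
    (fun e => Real.exp (t e / 2) * auxMv j e) x

lemma auxP_mul {d : ℕ} {N : Fin d → ℕ} [∀ i, NeZero (N i)] {ε : ℝ} (hε : 0 ≤ ε)
    (s u : TorusE d N → ℝ) :
    auxP ε s * (auxP ε u)ᴴ
      = auxGram ε (fun e => Real.exp (s e / 2) * Real.exp (u e / 2)) := by
  ext j k
  simp only [mul_apply, conjTranspose_apply, star_trivial, auxP, auxGram, of_apply]
  rw [Fintype.sum_sum_type]
  congr 1
  · simp only [Sum.elim_inl]
    by_cases h : j = k
    · subst h
      simp [Finset.sum_ite_eq, ite_mul, mul_ite, Real.mul_self_sqrt hε]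
    · rw [if_neg h, mul_zero]
      refine Finset.sum_eq_zero fun k' _ => ?_
      by_cases h1 : j = k'
      · subst h1; rw [if_neg (show ¬(k = j) from fun hh => h hh.symm), mul_zero]
      · rw [if_neg h1, zero_mul]
  · simp only [Sum.elim_inr]
    exact Finset.sum_congr rfl fun e _ => by ring

/-- Fix `d ≥ 1`, a finite box `Λ ⊂ ℤ^d` with periodic (torus)
edge set `E(T_N)` (side lengths ≥ 3), and `ε > 0`.  For `t ∈ ℝ^{E(T_N)}` let
`D t` be the symmetric positive definite matrix on `ℝ^Λ` determined by the
quadratic form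
`[f; D(t) f] = ∑_{jk ∈ E(T_N)} e^{t_{jk}} (f_j − f_k)² + ε ∑_{j ∈ Λ} f_j²`.
Then `t ↦ ln det D(t)` is convex on `ℝ^{E(T_N)}`. -/
theorem stmt_2 (d : ℕ) (hd : 1 ≤ d) (N : Fin d → ℕ) [∀ i, NeZero (N i)]
    (hN : ∀ i, 3 ≤ N i) (ε : ℝ) (hε : 0 < ε)
    (D : (TorusE d N → ℝ) → Matrix (TorusV d N) (TorusV d N) ℝ)
    (hD : ∀ t, (D t).PosDef)
    (hform : ∀ (t : TorusE d N → ℝ) (f : TorusV d N → ℝ),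
      f ⬝ᵥ ((D t) *ᵥ f) =
        (∑ e : TorusE d N, Real.exp (t e) * (f e.1 - f (e.1 + unitv e.2)) ^ 2)
          + ε * ∑ j : TorusV d N, (f j) ^ 2) :
    ConvexOn ℝ Set.univ (fun t => Real.log (D t).det) := by
  have hg : ∀ t, D t = auxGram ε (fun e => Real.exp (t e)) := fun t =>
    aux_symm_ext (hD t).isHermitian (auxGram_isHermitian ε _)
      (fun f => by rw [hform, auxGram_form])
  have hhalf : ∀ s u : TorusE d N → ℝ,
      (fun e => Real.exp (s e / 2) * Real.exp (u e / 2))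
        = fun e => Real.exp ((((1:ℝ)/2) • (s + u)) e) := by
    intro s u; funext e
    rw [← Real.exp_add]
    congr 1
    simp only [Pi.smul_apply, Pi.add_apply, smul_eq_mul]
    ring
  have hfact : ∀ s u, auxP ε s * (auxP ε u)ᴴ = D (((1:ℝ)/2) • (s + u)) := by
    intro s u
    rw [auxP_mul hε.le, hg (((1:ℝ)/2) • (s + u)), hhalf]
  have hfact_self : ∀ s : TorusE d N → ℝ, auxP ε s * (auxP ε s)ᴴ = D s := by
    intro s
    have harg : ((1:ℝ)/2) • (s + s) = s := by
      funext e
      show (1/2 : ℝ) * (s e + s e) = s e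
      ring
    rw [hfact s s, harg]
  have hPD : ∀ s : TorusE d N → ℝ, Matrix.PosDef (auxP ε s * (auxP ε s)ᴴ) := by
    intro s
    rw [hfact_self s]
    exact hD s
  have hmid : ∀ s u : TorusE d N → ℝ,
      Real.log (D ((1/2 : ℝ) • (s + u))).det
        ≤ (Real.log (D s).det + Real.log (D u).det) / 2 := by
    intro s u
    have h2 := aux_gram_schwarz (hPD s) (hPD u)
    rw [hfact s u, hfact_self s, hfact_self u] at h2
    have ds := (hD s).det_pos
    have du := (hD u).det_pos
    have dm := (hD (((1:ℝ)/2) • (s + u))).det_pos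
    have hlog := Real.log_le_log (by positivity) h2
    rw [Real.log_pow, Real.log_mul ds.ne' du.ne'] at hlog
    push_cast at hlog
    linarith
  have hdet : Continuous fun t : TorusE d N → ℝ => (D t).det := by
    have heq : (fun t : TorusE d N → ℝ => (D t).det)
        = fun t => (auxGram ε (fun e => Real.exp (t e))).det := funext fun t => by rw [hg]
    rw [heq]
    refine Continuous.matrix_det (continuous_matrix fun j k => ?_)
    show Continuous fun t : TorusE d N → ℝ =>
      ε * (if j = k then (1:ℝ) else 0) + ∑ e, Real.exp (t e) * (auxMv j e * auxMv k e)
    refine continuous_const.add (continuous_finset_sum _ fun e _ => ?_)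
    exact (Real.continuous_exp.comp (continuous_apply e)).mul continuous_const
  have hcont : Continuous fun t : TorusE d N → ℝ => Real.log (D t).det := by
    rw [continuous_iff_continuousAt]
    intro t
    exact ContinuousAt.comp (g := Real.log) (x := t)
      (Real.continuousAt_log (hD t).det_pos.ne') hdet.continuousAt
  exact aux_convexOn_of_midpoint hcont hmid
end

section
/- Fix d ≥ 1, the discrete torus T_N with vertex set Λ and edge set E(T_N), and ε > 0. For t ∈ ℝ^{E(T_N)} let D(t) be the symmetric positive definite matrix on ℝ^Λ with [f; D(t) f] = Σ_{jk ∈ E(T_N)} e^{t_{jk}} (f_j − f_k)² + ε Σ_{j∈Λ} f_j², and let G(t) = D(t)^{-1}. Let −Δ^p be the lattice Laplacian on T_N, i.e. [φ; −Δ^p φ] = Σ_{jk ∈ E(T_N)} (φ_j − φ_k)². Then for every v ∈ ℝ^Λ with Σ_{j∈Λ} v_j = 0 and every u ∈ ℝ^Λ solving −Δ^p u = v, one has 0 ≤ [v; G(t) v] ≤ Σ_{jk ∈ E(T_N)} (u_j − u_k)² e^{−t_{jk}}. -/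
open Matrix

/-- Minus the lattice Laplacian with periodic boundary conditions:
`(−Δ^p u)(x) = ∑_{y ∼ x} (u x − u y)`, the operator associated with the
quadratic form `[φ; −Δ^p φ] = ∑_{jk ∈ E(T_N)} (φ_j − φ_k)²`. -/
def torusLap {d : ℕ} {N : Fin d → ℕ} [∀ i, NeZero (N i)]
    (u : TorusV d N → ℝ) (x : TorusV d N) : ℝ :=
  ∑ i : Fin d, ((u x - u (x + unitv i)) + (u x - u (x - unitv i)))

lemma sbp {d : ℕ} {N : Fin d → ℕ} [∀ i, NeZero (N i)] (u w : TorusV d N → ℝ) :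
    ∑ x : TorusV d N, w x * torusLap u x =
      ∑ e : TorusE d N, (w e.1 - w (e.1 + unitv e.2)) * (u e.1 - u (e.1 + unitv e.2)) := by
  rw [Fintype.sum_prod_type]
  simp only [torusLap, Finset.mul_sum]
  rw [Finset.sum_comm]
  rw [show (∑ x : TorusV d N, ∑ i : Fin d,
      (w x - w (x + unitv i)) * (u x - u (x + unitv i))) = ∑ i : Fin d, ∑ x : TorusV d N,
      (w x - w (x + unitv i)) * (u x - u (x + unitv i)) from Finset.sum_comm]
  refine Finset.sum_congr rfl fun i _ => ?_
  have h2 : ∑ x : TorusV d N, w x * (u x - u (x - unitv i)) =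
      ∑ x : TorusV d N, w (x + unitv i) * (u (x + unitv i) - u x) := by
    rw [← Equiv.sum_comp (Equiv.addRight (unitv i))
      (fun x => w x * (u x - u (x - unitv i)))]
    simp [Equiv.coe_addRight, add_sub_cancel_right]
  calc ∑ x : TorusV d N, w x * ((u x - u (x + unitv i)) + (u x - u (x - unitv i)))
      = ∑ x : TorusV d N, (w x * (u x - u (x + unitv i)) + w x * (u x - u (x - unitv i))) := by
        refine Finset.sum_congr rfl fun x _ => by ring
    _ = (∑ x : TorusV d N, w x * (u x - u (x + unitv i)))
        + ∑ x : TorusV d N, w x * (u x - u (x - unitv i)) := Finset.sum_add_distrib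
    _ = ∑ x : TorusV d N, (w x - w (x + unitv i)) * (u x - u (x + unitv i)) := by
        rw [h2, ← Finset.sum_add_distrib]
        refine Finset.sum_congr rfl fun x _ => by ring

/-- Fix `d ≥ 1`, the discrete torus `T_N` (side lengths ≥ 3) and
`ε > 0`.  For `t ∈ ℝ^{E(T_N)}` let `D t` be the symmetric positive definite matrix with
`[f; D(t) f] = ∑_{jk ∈ E(T_N)} e^{t_{jk}} (f_j − f_k)² + ε ∑_j f_j²`, and let
`G(t) = D(t)⁻¹`.  Then for every `v` with `∑_j v_j = 0` and every `u` solving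
`−Δ^p u = v`, one has
`0 ≤ [v; G(t) v] ≤ ∑_{jk ∈ E(T_N)} (u_j − u_k)² e^{−t_{jk}}`. -/
theorem stmt_3 (d : ℕ) (hd : 1 ≤ d) (N : Fin d → ℕ) [∀ i, NeZero (N i)]
    (hN : ∀ i, 3 ≤ N i) (ε : ℝ) (hε : 0 < ε)
    (D : (TorusE d N → ℝ) → Matrix (TorusV d N) (TorusV d N) ℝ)
    (hD : ∀ t, (D t).PosDef)
    (hform : ∀ (t : TorusE d N → ℝ) (f : TorusV d N → ℝ),
      f ⬝ᵥ ((D t) *ᵥ f) =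
        (∑ e : TorusE d N, Real.exp (t e) * (f e.1 - f (e.1 + unitv e.2)) ^ 2)
          + ε * ∑ j : TorusV d N, (f j) ^ 2)
    (t : TorusE d N → ℝ) (v u : TorusV d N → ℝ)
    (hv : ∑ j : TorusV d N, v j = 0)
    (hu : ∀ x, torusLap u x = v x) :
    0 ≤ v ⬝ᵥ ((D t)⁻¹ *ᵥ v) ∧
      v ⬝ᵥ ((D t)⁻¹ *ᵥ v) ≤
        ∑ e : TorusE d N, (u e.1 - u (e.1 + unitv e.2)) ^ 2 * Real.exp (-(t e)) := by
  set w : TorusV d N → ℝ := (D t)⁻¹ *ᵥ v with hw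
  set B : ℝ := v ⬝ᵥ ((D t)⁻¹ *ᵥ v) with hBdef
  have hdet : IsUnit (D t).det := (hD t).det_pos.ne'.isUnit
  have hDw : (D t) *ᵥ w = v := by
    rw [hw, mulVec_mulVec, Matrix.mul_nonsing_inv _ hdet, Matrix.one_mulVec]
  have hnn : 0 ≤ B := by
    have h := ((hD t).inv.posSemidef).re_dotProduct_nonneg v
    simpa [hBdef] using h
  have hBv : B = ∑ x : TorusV d N, w x * v x := by
    rw [hBdef, dotProduct]
    exact Finset.sum_congr rfl fun x _ => mul_comm _ _
  have hB2 : B = ∑ e : TorusE d N,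
      (w e.1 - w (e.1 + unitv e.2)) * (u e.1 - u (e.1 + unitv e.2)) := by
    rw [hBv, ← sbp u w]
    exact Finset.sum_congr rfl fun x _ => by rw [hu x]
  set A : ℝ := ∑ e : TorusE d N, (u e.1 - u (e.1 + unitv e.2)) ^ 2 * Real.exp (-(t e)) with hA
  set S : ℝ := ∑ e : TorusE d N, Real.exp (t e) * (w e.1 - w (e.1 + unitv e.2)) ^ 2 with hS
  have hA0 : 0 ≤ A :=
    Finset.sum_nonneg fun e _ => mul_nonneg (sq_nonneg _) (Real.exp_pos _).le
  have hSB : S ≤ B := by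
    have h1 : w ⬝ᵥ ((D t) *ᵥ w) = S + ε * ∑ j : TorusV d N, (w j) ^ 2 := hform t w
    have h2 : w ⬝ᵥ ((D t) *ᵥ w) = B := by
      rw [hDw, hBv, dotProduct]
    have h3 : 0 ≤ ε * ∑ j : TorusV d N, (w j) ^ 2 :=
      mul_nonneg hε.le (Finset.sum_nonneg fun j _ => sq_nonneg _)
    linarith
  -- Cauchy–Schwarz
  set f : TorusE d N → ℝ := fun e => (u e.1 - u (e.1 + unitv e.2)) * Real.exp (-(t e) / 2)
  set g : TorusE d N → ℝ := fun e => (w e.1 - w (e.1 + unitv e.2)) * Real.exp (t e / 2)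
  have key := Finset.sum_mul_sq_le_sq_mul_sq Finset.univ f g
  have hfg : ∑ e : TorusE d N, f e * g e = B := by
    rw [hB2]
    refine Finset.sum_congr rfl fun e _ => ?_
    have : Real.exp (-(t e) / 2) * Real.exp (t e / 2) = 1 := by
      rw [← Real.exp_add, show -(t e) / 2 + t e / 2 = 0 from by ring, Real.exp_zero]
    calc f e * g e = ((w e.1 - w (e.1 + unitv e.2)) * (u e.1 - u (e.1 + unitv e.2)))
          * (Real.exp (-(t e) / 2) * Real.exp (t e / 2)) := by simp [f, g]; ring
      _ = (w e.1 - w (e.1 + unitv e.2)) * (u e.1 - u (e.1 + unitv e.2)) := by rw [this, mul_one]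
  have hff : ∑ e : TorusE d N, f e ^ 2 = A := by
    refine Finset.sum_congr rfl fun e _ => ?_
    have : Real.exp (-(t e) / 2) ^ 2 = Real.exp (-(t e)) := by
      rw [sq, ← Real.exp_add, show -(t e) / 2 + -(t e) / 2 = -(t e) from by ring]
    simp only [f, mul_pow, this]
  have hgg : ∑ e : TorusE d N, g e ^ 2 = S := by
    refine Finset.sum_congr rfl fun e _ => ?_
    have : Real.exp (t e / 2) ^ 2 = Real.exp (t e) := by
      rw [sq, ← Real.exp_add, show t e / 2 + t e / 2 = t e from by ring]
    simp only [g, mul_pow, this]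
    ring
  rw [hfg, hff, hgg] at key
  have hBA : B ≤ A := by
    have key2 : B ^ 2 ≤ A * B := key.trans (mul_le_mul_of_nonneg_left hSB hA0)
    rcases eq_or_lt_of_le hnn with h0 | hpos
    · rw [← h0]; exact hA0
    · have : B * B ≤ A * B := by rw [← sq]; exact key2
      exact le_of_mul_le_mul_right this hpos
  exact ⟨hnn, hBA⟩
end

section
/- Fix d ≥ 1, 0 < α < 1/2, and let μ̂ be, for any side lengths N and any ε > 0, the probability measure on ℝ^Λ × ℝ^{E(T_N)} with density proportional to exp(−A(φ,t)) ∏_{jk ∈ E(T_N)} f_α(e^{t_{jk}}) e^{t_{jk}}, where A(φ,t) = Σ_{jk ∈ E(T_N)} (1 + (φ_j − φ_k)²) e^{t_{jk}} + ε Σ_{j∈Λ} φ_j², and let ⟨·⟩ denote expectation under μ̂. Then there exists a constant C_u(α) < ∞, depending only on α (in particular independent of N, ε and the edge), such that for every edge jk ∈ E(T_N), ⟨t_{jk}⟩ ≤ C_u(α). -/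
open MeasureTheory

/-- The Gaussian action
`A(φ,t) = ∑_{jk ∈ E(T_N)} (1 + (φ_j − φ_k)²) e^{t_{jk}} + ε ∑_{j ∈ Λ} φ_j²`. -/
noncomputable def action (d : ℕ) (N : Fin d → ℕ) [∀ i, NeZero (N i)] (ε : ℝ)
    (φ : TorusV d N → ℝ) (t : TorusE d N → ℝ) : ℝ :=
  (∑ e : TorusE d N, (1 + (φ e.1 - φ (e.1 + unitv e.2)) ^ 2) * Real.exp (t e))
    + ε * ∑ j : TorusV d N, (φ j) ^ 2

/-- The (unnormalized) density
`exp(−A(φ,t)) ∏_{jk ∈ E(T_N)} f_α(e^{t_{jk}}) e^{t_{jk}}` of the measure `μ̂`. -/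
noncomputable def dens (f : ℝ → ℝ) (d : ℕ) (N : Fin d → ℕ) [∀ i, NeZero (N i)] (ε : ℝ)
    (φ : TorusV d N → ℝ) (t : TorusE d N → ℝ) : ℝ :=
  Real.exp (-(action d N ε φ t)) * ∏ e : TorusE d N, f (Real.exp (t e)) * Real.exp (t e)

/-- Expectation `⟨F⟩` under the probability measure `μ̂` with density proportional to
`dens`, expressed as a ratio of Lebesgue integrals on `ℝ^Λ × ℝ^{E(T_N)}`. -/
noncomputable def expec (f : ℝ → ℝ) (d : ℕ) (N : Fin d → ℕ) [∀ i, NeZero (N i)] (ε : ℝ)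
    (F : (TorusV d N → ℝ) → (TorusE d N → ℝ) → ℝ) : ℝ :=
  (∫ p : (TorusV d N → ℝ) × (TorusE d N → ℝ), F p.1 p.2 * dens f d N ε p.1 p.2) /
    ∫ p : (TorusV d N → ℝ) × (TorusE d N → ℝ), dens f d N ε p.1 p.2


lemma auxJ (α : ℝ) (f : ℝ → ℝ) (hfpos : ∀ x ∈ Set.Ioi (0 : ℝ), 0 < f x)
    (hlap : ∀ l : ℝ, 0 ≤ l →
      ∫ x in Set.Ioi (0 : ℝ), Real.exp (-l * x) * f x = Real.exp (-(l ^ α)))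
    (b : ℝ) (hb : 0 < b) :
    ∫⁻ s : ℝ, ENNReal.ofReal (Real.exp s * (Real.exp (-b * Real.exp s) * f (Real.exp s)))
      = ENNReal.ofReal (Real.exp (-(b ^ α))) := by
  set g : ℝ → ℝ := fun x => Real.exp (-b * x) * f x with hg
  have hval : ∫ x in Set.Ioi (0:ℝ), g x = Real.exp (-(b ^ α)) := hlap b hb.le
  have hIntg : IntegrableOn g (Set.Ioi (0:ℝ)) := by
    by_contra h
    rw [integral_undef h] at hval
    exact (Real.exp_pos _).ne' hval.symm
  have hderiv : ∀ x ∈ (Set.univ : Set ℝ), HasDerivWithinAt Real.exp (Real.exp x) Set.univ x :=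
    fun x _ => (Real.hasDerivAt_exp x).hasDerivWithinAt
  have hinj : Set.InjOn Real.exp Set.univ := Real.exp_injective.injOn
  have himg : Real.exp '' Set.univ = Set.Ioi (0:ℝ) := by
    rw [Set.image_univ, Real.range_exp]
  have hcv := integral_image_eq_integral_abs_deriv_smul MeasurableSet.univ hderiv hinj g
  rw [himg, Measure.restrict_univ] at hcv
  have hIntg2 : Integrable (fun s => |Real.exp s| • g (Real.exp s)) := by
    rw [← integrableOn_univ, ← integrableOn_image_iff_integrableOn_abs_deriv_smul
      MeasurableSet.univ hderiv hinj g, himg]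
    exact hIntg
  have heq : ∀ s : ℝ, |Real.exp s| • g (Real.exp s)
      = Real.exp s * (Real.exp (-b * Real.exp s) * f (Real.exp s)) := fun s => by
    rw [smul_eq_mul, abs_of_pos (Real.exp_pos s)]
  have hInt3 : Integrable (fun s => Real.exp s * (Real.exp (-b * Real.exp s) * f (Real.exp s))) :=
    hIntg2.congr (Filter.Eventually.of_forall heq)
  have hnn : 0 ≤ᵐ[volume] fun s => Real.exp s * (Real.exp (-b * Real.exp s) * f (Real.exp s)) := by
    filter_upwards with s
    have := hfpos (Real.exp s) (Real.exp_pos s)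
    positivity
  rw [← ofReal_integral_eq_lintegral_ofReal hInt3 hnn]
  congr 1
  rw [← funext heq, ← hcv, hval]

lemma rpow_subadd {x y p : ℝ} (hx : 0 ≤ x) (hy : 0 ≤ y) (hp : 0 ≤ p) (hp1 : p ≤ 1) :
    (x + y) ^ p ≤ x ^ p + y ^ p := by
  have h := NNReal.rpow_add_le_add_rpow x.toNNReal y.toNNReal hp hp1
  have := NNReal.coe_le_coe.2 h
  push_cast at this
  rwa [Real.coe_toNNReal _ hx, Real.coe_toNNReal _ hy] at this

lemma auxCore (α : ℝ) (hα0 : 0 < α) (hα1 : α ≤ 1) (f : ℝ → ℝ)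
    (hfpos : ∀ x ∈ Set.Ioi (0 : ℝ), 0 < f x)
    (hlap : ∀ l : ℝ, 0 ≤ l →
      ∫ x in Set.Ioi (0 : ℝ), Real.exp (-l * x) * f x = Real.exp (-(l ^ α)))
    (c : ℝ) (hc : 1 ≤ c) :
    ∫⁻ s : ℝ, ENNReal.ofReal
        (Real.exp s * (Real.exp (-c * Real.exp s) * f (Real.exp s) * Real.exp s))
      ≤ 2 * ∫⁻ s : ℝ, ENNReal.ofReal
        (Real.exp (-c * Real.exp s) * f (Real.exp s) * Real.exp s) := by
  have hb1 : (0:ℝ) < c - 1/2 := by linarith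
  have hJ1 := auxJ α f hfpos hlap (c - 1/2) hb1
  have hJc := auxJ α f hfpos hlap c (by linarith)
  -- pointwise: x * exp (-x/2) ≤ 2 * exp (-1)
  have hxe : ∀ x : ℝ, 0 < x → x * Real.exp (-(x/2)) ≤ 2 * Real.exp (-1) := by
    intro x hx
    have h1 := Real.add_one_le_exp (x/2 - 1)
    have h2 : x ≤ 2 * Real.exp (x/2 - 1) := by linarith
    calc x * Real.exp (-(x/2)) ≤ (2 * Real.exp (x/2 - 1)) * Real.exp (-(x/2)) :=
          mul_le_mul_of_nonneg_right h2 (Real.exp_pos _).le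
      _ = 2 * Real.exp (-1) := by rw [mul_assoc, ← Real.exp_add]; ring_nf
  have hpt : ∀ s : ℝ, Real.exp s * (Real.exp (-c * Real.exp s) * f (Real.exp s) * Real.exp s)
      ≤ (2 * Real.exp (-1)) *
        (Real.exp s * (Real.exp (-(c - 1/2) * Real.exp s) * f (Real.exp s))) := by
    intro s
    set x := Real.exp s with hxdef
    have hx : 0 < x := Real.exp_pos s
    have hfx : 0 ≤ f x := (hfpos x hx).le
    have hsplit : Real.exp (-c * x) = Real.exp (-(x/2)) * Real.exp (-(c - 1/2) * x) := by
      rw [← Real.exp_add]; ring_nf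
    have key : x * Real.exp (-c * x) ≤ (2 * Real.exp (-1)) * Real.exp (-(c - 1/2) * x) := by
      rw [hsplit, ← mul_assoc]
      exact mul_le_mul_of_nonneg_right (hxe x hx) (Real.exp_pos _).le
    have := mul_le_mul_of_nonneg_right key (mul_nonneg hfx hx.le)
    calc x * (Real.exp (-c * x) * f x * x)
        = (x * Real.exp (-c * x)) * (f x * x) := by ring
      _ ≤ ((2 * Real.exp (-1)) * Real.exp (-(c - 1/2) * x)) * (f x * x) := this
      _ = (2 * Real.exp (-1)) * (x * (Real.exp (-(c - 1/2) * x) * f x)) := by ring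
  have hnum : 2 * Real.exp (-1) * Real.exp (-((c - 1/2) ^ α)) ≤ 2 * Real.exp (-(c ^ α)) := by
    have hsub : c ^ α ≤ (c - 1/2) ^ α + 1 := by
      have h12 : ((1:ℝ)/2) ^ α ≤ 1 :=
        Real.rpow_le_one (by norm_num) (by norm_num) hα0.le
      have := rpow_subadd (x := c - 1/2) (y := 1/2) (by linarith) (by norm_num) hα0.le hα1
      have hcc : c - 1/2 + 1/2 = c := by ring
      rw [hcc] at this
      linarith
    rw [mul_assoc, ← Real.exp_add]
    have : Real.exp (-1 + -((c - 1/2) ^ α)) ≤ Real.exp (-(c ^ α)) := by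
      apply Real.exp_le_exp.2; linarith
    linarith
  calc ∫⁻ s : ℝ, ENNReal.ofReal
        (Real.exp s * (Real.exp (-c * Real.exp s) * f (Real.exp s) * Real.exp s))
      ≤ ∫⁻ s : ℝ, ENNReal.ofReal ((2 * Real.exp (-1)) *
          (Real.exp s * (Real.exp (-(c - 1/2) * Real.exp s) * f (Real.exp s)))) :=
        lintegral_mono fun s => ENNReal.ofReal_le_ofReal (hpt s)
    _ = ENNReal.ofReal (2 * Real.exp (-1)) * ∫⁻ s : ℝ, ENNReal.ofReal
          (Real.exp s * (Real.exp (-(c - 1/2) * Real.exp s) * f (Real.exp s))) := by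
        simp_rw [ENNReal.ofReal_mul (by positivity : (0:ℝ) ≤ 2 * Real.exp (-1))]
        exact lintegral_const_mul' _ _ ENNReal.ofReal_ne_top
    _ = ENNReal.ofReal (2 * Real.exp (-1) * Real.exp (-((c - 1/2) ^ α))) := by
        rw [hJ1, ← ENNReal.ofReal_mul (by positivity)]
    _ ≤ ENNReal.ofReal (2 * Real.exp (-(c ^ α))) := ENNReal.ofReal_le_ofReal hnum
    _ = 2 * ENNReal.ofReal (Real.exp (-(c ^ α))) := by
        rw [ENNReal.ofReal_mul (by norm_num : (0:ℝ) ≤ 2)]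
        norm_num
    _ = 2 * ∫⁻ s : ℝ, ENNReal.ofReal
          (Real.exp (-c * Real.exp s) * f (Real.exp s) * Real.exp s) := by
        rw [← hJc]
        congr 1
        apply lintegral_congr
        intro s
        congr 1
        ring

lemma auxSlice (α : ℝ) (hα0 : 0 < α) (hα1 : α ≤ 1) (f : ℝ → ℝ)
    (hfpos : ∀ x ∈ Set.Ioi (0 : ℝ), 0 < f x)
    (hlap : ∀ l : ℝ, 0 ≤ l →
      ∫ x in Set.Ioi (0 : ℝ), Real.exp (-l * x) * f x = Real.exp (-(l ^ α)))
    (c C : ℝ) (hc : 1 ≤ c) (hC : 0 ≤ C) :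
    ∫⁻ s : ℝ, ENNReal.ofReal
        (Real.exp s * (C * (Real.exp (-c * Real.exp s) * f (Real.exp s) * Real.exp s)))
      ≤ 2 * ∫⁻ s : ℝ, ENNReal.ofReal
        (C * (Real.exp (-c * Real.exp s) * f (Real.exp s) * Real.exp s)) := by
  have h1 : ∀ s : ℝ, Real.exp s * (C * (Real.exp (-c * Real.exp s) * f (Real.exp s) * Real.exp s))
      = C * (Real.exp s * (Real.exp (-c * Real.exp s) * f (Real.exp s) * Real.exp s)) :=
    fun s => by ring
  calc ∫⁻ s : ℝ, ENNReal.ofReal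
        (Real.exp s * (C * (Real.exp (-c * Real.exp s) * f (Real.exp s) * Real.exp s)))
      = ENNReal.ofReal C * ∫⁻ s : ℝ, ENNReal.ofReal
          (Real.exp s * (Real.exp (-c * Real.exp s) * f (Real.exp s) * Real.exp s)) := by
        simp_rw [h1, ENNReal.ofReal_mul hC]
        exact lintegral_const_mul' _ _ ENNReal.ofReal_ne_top
    _ ≤ ENNReal.ofReal C * (2 * ∫⁻ s : ℝ, ENNReal.ofReal
          (Real.exp (-c * Real.exp s) * f (Real.exp s) * Real.exp s)) :=
        mul_le_mul_right (auxCore α hα0 hα1 f hfpos hlap c hc) _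
    _ = 2 * ∫⁻ s : ℝ, ENNReal.ofReal
          (C * (Real.exp (-c * Real.exp s) * f (Real.exp s) * Real.exp s)) := by
        simp_rw [ENNReal.ofReal_mul hC]
        rw [lintegral_const_mul' _ _ ENNReal.ofReal_ne_top]
        ring

/-- custom predicate `x = e`, kept semireducible to pin down typeclass instances -/
def isE {γ : Type*} (e x : γ) : Prop := x = e

instance {γ : Type*} [DecidableEq γ] (e : γ) : DecidablePred (isE e) :=
  fun x => (inferInstance : Decidable (x = e))

instance {γ : Type*} (e : γ) : Unique {x // isE e x} :=
  ⟨⟨⟨e, rfl⟩⟩, fun a => Subtype.ext a.2⟩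

section Key

variable {d : ℕ} {N : Fin d → ℕ} [∀ i, NeZero (N i)] (e : TorusE d N)

/-- reassembling a configuration from the value at `e` and the rest -/
noncomputable def tm (e : TorusE d N) (r : {x : TorusE d N // ¬ isE e x} → ℝ) (s : ℝ) :
    TorusE d N → ℝ := fun e' => if h : isE e e' then s else r ⟨e', h⟩

/-- the coordinate-splitting measurable equivalence -/
noncomputable def Psi (e : TorusE d N) :
    (((TorusV d N → ℝ) × ({x : TorusE d N // ¬ isE e x} → ℝ)) × ℝ)
      ≃ᵐ (TorusV d N → ℝ) × (TorusE d N → ℝ) :=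
  MeasurableEquiv.prodAssoc.trans
    ((MeasurableEquiv.refl (TorusV d N → ℝ)).prodCongr (MeasurableEquiv.prodComm.trans
      (((MeasurableEquiv.funUnique {x : TorusE d N // isE e x} ℝ).symm.prodCongr
        (MeasurableEquiv.refl ({x : TorusE d N // ¬ isE e x} → ℝ))).trans
        (MeasurableEquiv.piEquivPiSubtypeProd (fun _ : TorusE d N => ℝ) (isE e)).symm)))

lemma Psi_mp : MeasurePreserving (Psi e) volume volume := by
  have hA : MeasurePreserving
      (MeasurableEquiv.piEquivPiSubtypeProd (fun _ : TorusE d N => ℝ) (isE e))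
      volume volume :=
    volume_preserving_piEquivPiSubtypeProd (fun _ : TorusE d N => ℝ) (isE e)
  have h0 := volume_preserving_prodAssoc (α₁ := TorusV d N → ℝ)
    (β₁ := {x : TorusE d N // ¬ isE e x} → ℝ) (γ₁ := ℝ)
  have hswap := Measure.measurePreserving_swap
    (μ := (volume : Measure ({x : TorusE d N // ¬ isE e x} → ℝ))) (ν := (volume : Measure ℝ))
  simp only [← Measure.volume_eq_prod] at hswap
  have hmeq : (volume : Measure ({x : TorusE d N // isE e x} → ℝ)) =
      @volume _ (@MeasureSpace.pi {x : TorusE d N // isE e x} Unique.fintype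
        (fun _ => ℝ) (fun _ => Real.measureSpace)) := by congr!
  have hfu : MeasurePreserving
      (⇑(MeasurableEquiv.funUnique {x : TorusE d N // isE e x} ℝ).symm) volume volume := by
    rw [hmeq]
    exact MeasurePreserving.symm _ (volume_preserving_funUnique {x : TorusE d N // isE e x} ℝ)
  have hmap1 := hfu.prod (MeasurePreserving.id
    (volume : Measure ({x : TorusE d N // ¬ isE e x} → ℝ)))
  simp only [← Measure.volume_eq_prod] at hmap1
  have hsymmA := MeasurePreserving.symm _ hA
  have hinner := (hsymmA.comp (hmap1.comp hswap) : _)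
  have houter := (MeasurePreserving.id (volume : Measure (TorusV d N → ℝ))).prod hinner
  simp only [← Measure.volume_eq_prod] at houter
  have hcoe : ⇑(Psi e) =
      (Prod.map (id : (TorusV d N → ℝ) → _)
        ((⇑(MeasurableEquiv.piEquivPiSubtypeProd (fun _ : TorusE d N => ℝ) (isE e)).symm) ∘
          ((Prod.map (⇑(MeasurableEquiv.funUnique {x : TorusE d N // isE e x} ℝ).symm)
            (id : ({x : TorusE d N // ¬ isE e x} → ℝ) → _)) ∘ Prod.swap))) ∘
        ⇑(MeasurableEquiv.prodAssoc :
          (((TorusV d N → ℝ) × ({x : TorusE d N // ¬ isE e x} → ℝ)) × ℝ)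
            ≃ᵐ (TorusV d N → ℝ) × (({x : TorusE d N // ¬ isE e x} → ℝ) × ℝ)) := rfl
  rw [hcoe]
  exact houter.comp h0

omit [∀ i, NeZero (N i)] in
lemma Psi_apply (φ : TorusV d N → ℝ) (r : {x : TorusE d N // ¬ isE e x} → ℝ) (s : ℝ) :
    Psi e ((φ, r), s) = (φ, tm e r s) := by
  refine Prod.ext rfl ?_
  funext e'
  show (MeasurableEquiv.piEquivPiSubtypeProd (fun _ : TorusE d N => ℝ)
      (isE e)).symm ((fun _ => s), r) e' = tm e r s e'
  by_cases h : isE e e'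
  · simp [MeasurableEquiv.piEquivPiSubtypeProd, Equiv.piEquivPiSubtypeProd, tm, h]
  · simp [MeasurableEquiv.piEquivPiSubtypeProd, Equiv.piEquivPiSubtypeProd, tm, h]

end Key

section Fact

variable {d : ℕ} {N : Fin d → ℕ} [∀ i, NeZero (N i)]

lemma dens_factor (f : ℝ → ℝ) (hfpos : ∀ x ∈ Set.Ioi (0 : ℝ), 0 < f x) (ε : ℝ)
    (e : TorusE d N) (φ : TorusV d N → ℝ) (r : {x : TorusE d N // ¬ isE e x} → ℝ) :
    ∃ C : ℝ, 0 ≤ C ∧ ∀ s : ℝ, dens f d N ε φ (tm e r s)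
      = C * (Real.exp (-(1 + (φ e.1 - φ (e.1 + unitv e.2)) ^ 2) * Real.exp s)
          * f (Real.exp s) * Real.exp s) := by
  refine ⟨Real.exp (-((∑ e' ∈ Finset.univ.erase e,
      (1 + (φ e'.1 - φ (e'.1 + unitv e'.2)) ^ 2) * Real.exp (tm e r 0 e'))
      + ε * ∑ j, φ j ^ 2)) *
    ∏ e' ∈ Finset.univ.erase e, f (Real.exp (tm e r 0 e')) * Real.exp (tm e r 0 e'), ?_, ?_⟩
  · exact mul_nonneg (Real.exp_pos _).le (Finset.prod_nonneg fun e' _ =>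
      mul_nonneg (hfpos _ (Real.exp_pos _)).le (Real.exp_pos _).le)
  · intro s
    have htm_e : tm e r s e = s := dif_pos rfl
    have htm_ne : ∀ e' ∈ Finset.univ.erase e, tm e r s e' = tm e r 0 e' := by
      intro e' he'
      have h : ¬ isE e e' := Finset.ne_of_mem_erase he'
      show dite _ _ _ = dite _ _ _
      rw [dif_neg h, dif_neg h]
    unfold dens action
    rw [← Finset.add_sum_erase _ _ (Finset.mem_univ e),
        ← Finset.mul_prod_erase _ _ (Finset.mem_univ e), htm_e,
        Finset.sum_congr rfl (fun e' he' => by rw [htm_ne e' he']),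
        Finset.prod_congr rfl (fun e' he' => by rw [htm_ne e' he'])]
    rw [show -(((1 + (φ e.1 - φ (e.1 + unitv e.2)) ^ 2) * Real.exp s
          + ∑ e' ∈ Finset.univ.erase e,
            (1 + (φ e'.1 - φ (e'.1 + unitv e'.2)) ^ 2) * Real.exp (tm e r 0 e'))
        + ε * ∑ j, φ j ^ 2)
      = (-((∑ e' ∈ Finset.univ.erase e,
            (1 + (φ e'.1 - φ (e'.1 + unitv e'.2)) ^ 2) * Real.exp (tm e r 0 e'))
          + ε * ∑ j, φ j ^ 2))
        + (-(1 + (φ e.1 - φ (e.1 + unitv e.2)) ^ 2) * Real.exp s) from by ring,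
      Real.exp_add]
    ring

end Fact

section KeyIneq

variable {d : ℕ} {N : Fin d → ℕ} [∀ i, NeZero (N i)]

lemma keyIneq (α : ℝ) (hα0 : 0 < α) (hα1 : α ≤ 1) (f : ℝ → ℝ)
    (hfpos : ∀ x ∈ Set.Ioi (0 : ℝ), 0 < f x)
    (hlap : ∀ l : ℝ, 0 ≤ l →
      ∫ x in Set.Ioi (0 : ℝ), Real.exp (-l * x) * f x = Real.exp (-(l ^ α)))
    (ε : ℝ) (e : TorusE d N)
    (hAEM : AEMeasurable
      (fun p : (TorusV d N → ℝ) × (TorusE d N → ℝ) => dens f d N ε p.1 p.2) volume) :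
    ∫⁻ p : (TorusV d N → ℝ) × (TorusE d N → ℝ),
        ENNReal.ofReal (Real.exp (p.2 e) * dens f d N ε p.1 p.2)
      ≤ 2 * ∫⁻ p : (TorusV d N → ℝ) × (TorusE d N → ℝ),
        ENNReal.ofReal (dens f d N ε p.1 p.2) := by
  have hmp := Psi_mp e
  have hemb := (Psi e).measurableEmbedding
  have h1 := (hmp.lintegral_comp_emb hemb
    (fun p : (TorusV d N → ℝ) × (TorusE d N → ℝ) =>
      ENNReal.ofReal (Real.exp (p.2 e) * dens f d N ε p.1 p.2))).symm
  have h0 := (hmp.lintegral_comp_emb hemb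
    (fun p : (TorusV d N → ℝ) × (TorusE d N → ℝ) =>
      ENNReal.ofReal (dens f d N ε p.1 p.2))).symm
  rw [h1, h0]
  have hqmp := hmp.quasiMeasurePreserving
  have hgm : AEMeasurable
      (fun q : ((TorusV d N → ℝ) × ({x : TorusE d N // ¬ isE e x} → ℝ)) × ℝ =>
        dens f d N ε ((Psi e) q).1 ((Psi e) q).2) volume :=
    hAEM.comp_quasiMeasurePreserving hqmp
  have hexp_m : Measurable
      (fun q : ((TorusV d N → ℝ) × ({x : TorusE d N // ¬ isE e x} → ℝ)) × ℝ =>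
        Real.exp (((Psi e) q).2 e)) :=
    Real.measurable_exp.comp (((measurable_pi_apply e).comp measurable_snd).comp
      (Psi e).measurable)
  have hF1 : AEMeasurable
      (fun q : ((TorusV d N → ℝ) × ({x : TorusE d N // ¬ isE e x} → ℝ)) × ℝ =>
        ENNReal.ofReal (Real.exp (((Psi e) q).2 e) * dens f d N ε ((Psi e) q).1 ((Psi e) q).2))
      volume :=
    ENNReal.measurable_ofReal.comp_aemeasurable (hexp_m.aemeasurable.mul hgm)
  have hF0 : AEMeasurable
      (fun q : ((TorusV d N → ℝ) × ({x : TorusE d N // ¬ isE e x} → ℝ)) × ℝ =>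
        ENNReal.ofReal (dens f d N ε ((Psi e) q).1 ((Psi e) q).2)) volume :=
    ENNReal.measurable_ofReal.comp_aemeasurable hgm
  rw [Measure.volume_eq_prod] at hF1 hF0 ⊢
  rw [lintegral_prod _ hF1, lintegral_prod _ hF0, ← lintegral_const_mul' 2 _
    (by norm_num : (2 : ENNReal) ≠ ⊤)]
  apply lintegral_mono
  rintro ⟨φ, r⟩
  obtain ⟨C, hC0, hCeq⟩ := dens_factor f hfpos ε e φ r
  have hc : 1 ≤ 1 + (φ e.1 - φ (e.1 + unitv e.2)) ^ 2 := le_add_of_nonneg_right (sq_nonneg _)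
  have htm_e : ∀ s : ℝ, tm e r s e = s := fun s => dif_pos rfl
  calc ∫⁻ s : ℝ, ENNReal.ofReal
        (Real.exp ((Psi e ((φ, r), s)).2 e) * dens f d N ε (Psi e ((φ, r), s)).1
          (Psi e ((φ, r), s)).2)
      = ∫⁻ s : ℝ, ENNReal.ofReal (Real.exp s *
          (C * (Real.exp (-(1 + (φ e.1 - φ (e.1 + unitv e.2)) ^ 2) * Real.exp s)
            * f (Real.exp s) * Real.exp s))) := by
        apply lintegral_congr
        intro s
        rw [Psi_apply]
        simp only
        rw [htm_e s, hCeq s]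
    _ ≤ 2 * ∫⁻ s : ℝ, ENNReal.ofReal
          (C * (Real.exp (-(1 + (φ e.1 - φ (e.1 + unitv e.2)) ^ 2) * Real.exp s)
            * f (Real.exp s) * Real.exp s)) :=
        auxSlice α hα0 hα1 f hfpos hlap _ C hc hC0
    _ = 2 * ∫⁻ s : ℝ, ENNReal.ofReal
          (dens f d N ε (Psi e ((φ, r), s)).1 (Psi e ((φ, r), s)).2) := by
        congr 1
        apply lintegral_congr
        intro s
        rw [Psi_apply]
        simp only
        rw [hCeq s]

end KeyIneq

/-- Fix `d ≥ 1`, `0 < α < 1/2`.  With `⟨·⟩` the expectation under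
`μ̂` (any side lengths `N` ≥ 3, any `ε > 0`), there is a constant `C_u(α) < ∞`,
independent of `N`, `ε` and the edge, with `⟨t_{jk}⟩ ≤ C_u(α)` for every edge. -/
theorem stmt_7 (d : ℕ) (hd : 1 ≤ d) (α : ℝ) (hα0 : 0 < α) (hα : α < 1 / 2)
    (f : ℝ → ℝ) (hfpos : ∀ x ∈ Set.Ioi (0 : ℝ), 0 < f x)
    (hlap : ∀ l : ℝ, 0 ≤ l →
      ∫ x in Set.Ioi (0 : ℝ), Real.exp (-l * x) * f x = Real.exp (-(l ^ α))) :
    ∃ Cu : ℝ, ∀ (N : Fin d → ℕ) [∀ i, NeZero (N i)], (∀ i, 3 ≤ N i) →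
      ∀ ε : ℝ, 0 < ε → ∀ e : TorusE d N,
        expec f d N ε (fun _ t => t e) ≤ Cu := by
  refine ⟨2, ?_⟩
  intro N _inst hN3 ε hε e
  have hα1 : α ≤ 1 := by linarith
  have hDpos : ∀ (φ : TorusV d N → ℝ) (t : TorusE d N → ℝ), 0 < dens f d N ε φ t := by
    intro φ t
    unfold dens
    exact mul_pos (Real.exp_pos _) (Finset.prod_pos fun e' _ =>
      mul_pos (hfpos _ (Real.exp_pos _)) (Real.exp_pos _))
  simp only [expec]
  have hDen0 : 0 ≤ ∫ p : (TorusV d N → ℝ) × (TorusE d N → ℝ), dens f d N ε p.1 p.2 :=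
    integral_nonneg fun p => (hDpos _ _).le
  rcases eq_or_lt_of_le hDen0 with hd0 | hdpos
  · rw [← hd0, div_zero]; norm_num
  have hInt : Integrable
      (fun p : (TorusV d N → ℝ) × (TorusE d N → ℝ) => dens f d N ε p.1 p.2) := by
    by_contra h
    rw [integral_undef h] at hdpos
    exact lt_irrefl _ hdpos
  have hkey := keyIneq α hα0 hα1 f hfpos hlap ε e hInt.aemeasurable
  have hL0 : ENNReal.ofReal (∫ p : (TorusV d N → ℝ) × (TorusE d N → ℝ), dens f d N ε p.1 p.2)
      = ∫⁻ p : (TorusV d N → ℝ) × (TorusE d N → ℝ), ENNReal.ofReal (dens f d N ε p.1 p.2) :=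
    ofReal_integral_eq_lintegral_ofReal hInt (Filter.Eventually.of_forall fun p => (hDpos _ _).le)
  have hGnn : ∀ p : (TorusV d N → ℝ) × (TorusE d N → ℝ),
      0 ≤ Real.exp (p.2 e) * dens f d N ε p.1 p.2 :=
    fun p => mul_nonneg (Real.exp_pos _).le (hDpos _ _).le
  have haesmG : AEStronglyMeasurable
      (fun p : (TorusV d N → ℝ) × (TorusE d N → ℝ) =>
        Real.exp (p.2 e) * dens f d N ε p.1 p.2) volume :=
    ((Real.measurable_exp.comp
      ((measurable_pi_apply e).comp measurable_snd)).aestronglyMeasurable).mul hInt.1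
  have hkey2 : (∫⁻ p : (TorusV d N → ℝ) × (TorusE d N → ℝ),
      ENNReal.ofReal (Real.exp (p.2 e) * dens f d N ε p.1 p.2))
      ≤ 2 * ENNReal.ofReal (∫ p : (TorusV d N → ℝ) × (TorusE d N → ℝ),
        dens f d N ε p.1 p.2) := by
    rw [hL0]; exact hkey
  have htop : (2 : ENNReal) * ENNReal.ofReal (∫ p : (TorusV d N → ℝ) × (TorusE d N → ℝ),
      dens f d N ε p.1 p.2) < ⊤ :=
    ENNReal.mul_lt_top (by norm_num) ENNReal.ofReal_lt_top
  have hG : Integrable (fun p : (TorusV d N → ℝ) × (TorusE d N → ℝ) =>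
      Real.exp (p.2 e) * dens f d N ε p.1 p.2) := by
    refine ⟨haesmG, ?_⟩
    rw [hasFiniteIntegral_iff_ofReal (Filter.Eventually.of_forall hGnn)]
    exact lt_of_le_of_lt hkey2 htop
  have hGval : (∫ p : (TorusV d N → ℝ) × (TorusE d N → ℝ),
      Real.exp (p.2 e) * dens f d N ε p.1 p.2)
      ≤ 2 * ∫ p : (TorusV d N → ℝ) × (TorusE d N → ℝ), dens f d N ε p.1 p.2 := by
    rw [integral_eq_lintegral_of_nonneg_ae (Filter.Eventually.of_forall hGnn) haesmG]
    calc (∫⁻ p : (TorusV d N → ℝ) × (TorusE d N → ℝ),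
        ENNReal.ofReal (Real.exp (p.2 e) * dens f d N ε p.1 p.2)).toReal
        ≤ ((2 : ENNReal) * ENNReal.ofReal (∫ p : (TorusV d N → ℝ) × (TorusE d N → ℝ),
            dens f d N ε p.1 p.2)).toReal := ENNReal.toReal_mono htop.ne hkey2
      _ = 2 * ∫ p : (TorusV d N → ℝ) × (TorusE d N → ℝ), dens f d N ε p.1 p.2 := by
          rw [ENNReal.toReal_mul, ENNReal.toReal_ofReal hDen0]
          norm_num
  by_cases hNint : Integrable (fun p : (TorusV d N → ℝ) × (TorusE d N → ℝ) =>
      p.2 e * dens f d N ε p.1 p.2)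
  · have hmono : (∫ p : (TorusV d N → ℝ) × (TorusE d N → ℝ), p.2 e * dens f d N ε p.1 p.2)
        ≤ ∫ p : (TorusV d N → ℝ) × (TorusE d N → ℝ),
          Real.exp (p.2 e) * dens f d N ε p.1 p.2 := by
      apply integral_mono hNint hG
      intro p
      have h := Real.add_one_le_exp (p.2 e)
      exact mul_le_mul_of_nonneg_right (by linarith) (hDpos _ _).le
    rw [div_le_iff₀ hdpos]
    linarith
  · rw [integral_undef hNint, zero_div]
    norm_num
end
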